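/- Let (A^•, 0) be a nonnegatively graded differential graded algebra over ℂ with zero differential and finite-dimensional graded pieces, and let η ∈ A^1. Form the cochain complex A^•(η) over R̂ = ℂ[[s]] with terms A^i ⊗_ℂ R̂ and differential given by ω ⊗ 1 ↦ (ω ∧ η) ⊗ s. Then for every i, the torsion submodule of H^i(A^•(η)) is annihilated by s, i.e. all cohomology modules are direct sums of a free module and copies of ℂ[[s]]/(s). -/

import Mathlib

set_option synthInstance.maxHeartbeats 1000000
set_option maxHeartbeats 1000000

open TensorProduct

/-- Multiplication by a degree-one element `η` as a `ℂ`-linear map `A^i → A^{i+1}` in a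
graded algebra. -/
noncomputable def mulEta {A : Type*} [Ring A] [Algebra ℂ A]
    (𝒜 : ℕ → Submodule ℂ A) [GradedAlgebra 𝒜] (η : ↥(𝒜 1)) (i : ℕ) :
    ↥(𝒜 i) →ₗ[ℂ] ↥(𝒜 (i + 1)) where
  toFun x := ⟨(x : A) * (η : A), SetLike.mul_mem_graded x.2 η.2⟩
  map_add' x y := by ext; simp [add_mul]
  map_smul' c x := by ext; simp [smul_mul_assoc]

/-- The differential of the thickened complex `A^•(η, ∞)` over `R̂ = ℂ[[s]]`: on
`A^i ⊗ ℂ[[s]]` it is `ω ⊗ 1 ↦ (ω ∧ η) ⊗ s`, i.e. `s` times the base change of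
multiplication by `η`. -/
noncomputable def thickenedDiff {A : Type*} [Ring A] [Algebra ℂ A]
    (𝒜 : ℕ → Submodule ℂ A) [GradedAlgebra 𝒜] (η : ↥(𝒜 1)) (i : ℕ) :
    ((PowerSeries ℂ) ⊗[ℂ] ↥(𝒜 i)) →ₗ[PowerSeries ℂ] ((PowerSeries ℂ) ⊗[ℂ] ↥(𝒜 (i + 1))) :=
  (PowerSeries.X : PowerSeries ℂ) • LinearMap.baseChange (PowerSeries ℂ) (mulEta 𝒜 η i)

/-- Any `ℂ`-linear map between vector spaces has a "quasi-inverse" `g` with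
`f ∘ g ∘ f = f`. -/
lemma exists_quasiInverse {V W : Type*} [AddCommGroup V] [Module ℂ V]
    [AddCommGroup W] [Module ℂ W] (f : V →ₗ[ℂ] W) :
    ∃ g : W →ₗ[ℂ] V, f ∘ₗ g ∘ₗ f = f := by
  obtain ⟨q, hq⟩ := Submodule.exists_isCompl (LinearMap.range f)
  obtain ⟨h, hh⟩ := f.rangeRestrict.exists_rightInverse_of_surjective
    (by simp [LinearMap.range_rangeRestrict])
  refine ⟨h ∘ₗ Submodule.linearProjOfIsCompl _ q hq, ?_⟩
  ext v
  have h1 : Submodule.linearProjOfIsCompl _ q hq (f v)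
      = ⟨f v, LinearMap.mem_range_self f v⟩ :=
    Submodule.linearProjOfIsCompl_apply_left hq ⟨f v, LinearMap.mem_range_self f v⟩
  have h2 : f.rangeRestrict (h ⟨f v, LinearMap.mem_range_self f v⟩)
      = ⟨f v, LinearMap.mem_range_self f v⟩ := by
    rw [← LinearMap.comp_apply, hh]; rfl
  have h3 : f (h ⟨f v, LinearMap.mem_range_self f v⟩) = f v :=
    congrArg Subtype.val h2
  simp [h1, h3]

/-- The base change of a free `ℂ`-module along `ℂ[[s]]` is torsion-free. -/
lemma nzsd (V : Type*) [AddCommGroup V] [Module ℂ V] [Module.Free ℂ V] :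
    NoZeroSMulDivisors (PowerSeries ℂ) ((PowerSeries ℂ) ⊗[ℂ] V) :=
  ⟨fun h => ((Module.Free.chooseBasis (PowerSeries ℂ) ((PowerSeries ℂ) ⊗[ℂ] V)).smul_eq_zero).mp h⟩

/-- The range of the base change of a `ℂ`-linear map is a saturated submodule: any
element with a nonzero multiple in the range is itself in the range. -/
lemma saturated {V W : Type*} [AddCommGroup V] [Module ℂ V] [AddCommGroup W] [Module ℂ W]
    [Module.Free ℂ W]
    (f : V →ₗ[ℂ] W) (c : PowerSeries ℂ) (hc : c ≠ 0)
    (z : (PowerSeries ℂ) ⊗[ℂ] W)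
    (hz : c • z ∈ LinearMap.range (LinearMap.baseChange (PowerSeries ℂ) f)) :
    z ∈ LinearMap.range (LinearMap.baseChange (PowerSeries ℂ) f) := by
  obtain ⟨g, hg⟩ := exists_quasiInverse f
  set F := LinearMap.baseChange (PowerSeries ℂ) f
  set G := LinearMap.baseChange (PowerSeries ℂ) g
  obtain ⟨u, hu⟩ := hz
  have hFGF : F ∘ₗ G ∘ₗ F = F := by
    rw [← LinearMap.baseChange_comp, ← LinearMap.baseChange_comp, hg]
  have key : F (G (c • z)) = c • z := by
    rw [← hu]
    exact DFunLike.congr_fun hFGF u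
  have hzero : c • (F (G z) - z) = 0 := by
    rw [smul_sub, ← map_smul, ← map_smul, key, sub_self]
  have := nzsd W
  rcases smul_eq_zero.mp hzero with h | h
  · exact absurd h hc
  · exact ⟨G z, sub_eq_zero.mp h⟩

/-- For a nonnegatively graded, graded-commutative differential graded `ℂ`-algebra with zero
differential and finite-dimensional graded pieces, and `η ∈ A^1`, each cohomology module of
the complex `A^•(η, ∞)` over `ℂ[[s]]` has its torsion annihilated by `s` (so it is a direct
sum of a free module and copies of `ℂ[[s]]/(s)`): in degree `0` a torsion element `z` of
`H^0 = ker` satisfies `s • z = 0`, and in degree `i+1` a cocycle `z` that is torsion modulo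
coboundaries satisfies `s • z ∈ im`. -/
theorem formal_thickened_complex_semisimple
    (A : Type) [Ring A] [Algebra ℂ A] (𝒜 : ℕ → Submodule ℂ A) [GradedAlgebra 𝒜]
    [∀ i, FiniteDimensional ℂ ↥(𝒜 i)]
    (hcomm : ∀ (i j : ℕ) (x : ↥(𝒜 i)) (y : ↥(𝒜 j)),
      (x : A) * (y : A) = ((-1 : ℂ) ^ (i * j)) • ((y : A) * (x : A)))
    (η : ↥(𝒜 1)) :
    (∀ z ∈ LinearMap.ker (thickenedDiff 𝒜 η 0),
      (∃ c : PowerSeries ℂ, c ≠ 0 ∧ c • z = 0) →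
        (PowerSeries.X : PowerSeries ℂ) • z = 0) ∧
    ∀ i : ℕ, ∀ z ∈ LinearMap.ker (thickenedDiff 𝒜 η (i + 1)),
      (∃ c : PowerSeries ℂ, c ≠ 0 ∧ c • z ∈ LinearMap.range (thickenedDiff 𝒜 η i)) →
        (PowerSeries.X : PowerSeries ℂ) • z ∈ LinearMap.range (thickenedDiff 𝒜 η i) := by
  constructor
  · rintro z _ ⟨c, hc, hcz⟩
    have := nzsd ↥(𝒜 0)
    rcases smul_eq_zero.mp hcz with h | h
    · exact absurd h hc
    · rw [h, smul_zero]
  · rintro i z _ ⟨c, hc, hcz⟩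
    -- `c • z` lies in the range of the base-changed multiplication map
    have hcz' : c • z ∈ LinearMap.range (LinearMap.baseChange (PowerSeries ℂ) (mulEta 𝒜 η i)) := by
      obtain ⟨u, hu⟩ := hcz
      refine ⟨(PowerSeries.X : PowerSeries ℂ) • u, ?_⟩
      rw [map_smul, ← hu]
      rfl
    obtain ⟨v, hv⟩ := saturated (mulEta 𝒜 η i) c hc z hcz'
    exact ⟨v, by simp [thickenedDiff, LinearMap.smul_apply, hv]⟩
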